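/- For n, d natural numbers with d ≥ 3 and real m ≥ 0, the determinant of the 2×2 matrix with rows ((2n - 2d - m)/2 · n, -dmn/f) and (nf²/2, nf(d + 2m - 2n)) — arising as the coefficient matrix of (g^{kl}ψ_{kl}, υ) in the order-n recursion for the weighted ambient metric — equals n² f (2n - d - m)(n - d - m) up to nonzero factors; in particular, it is nonzero if and only if n ∉ {(d+m)/2, d+m}. -/
import Mathlib


open Matrix BigOperators

noncomputable section

/-- A metric (or 2-tensor) field on a coordinate patch of `ℝⁿ`, given by its
component matrix at each point. -/
abbrev MetricField (n : ℕ) := (Fin n → ℝ) → Matrix (Fin n) (Fin n) ℝ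

/-- Partial derivative of a scalar function in the `i`-th coordinate direction. -/
def pd {n : ℕ} (i : Fin n) (h : (Fin n → ℝ) → ℝ) (x : Fin n → ℝ) : ℝ :=
  fderiv ℝ h x (Pi.single i 1)

/-- Christoffel symbols of the first kind `Γ_{ijk}`. -/
def ChristoffelLow {n : ℕ} (g : MetricField n) (i j k : Fin n) (x : Fin n → ℝ) : ℝ :=
  (pd i (fun y => g y j k) x + pd j (fun y => g y i k) x - pd k (fun y => g y i j) x) / 2

/-- Christoffel symbols of the second kind `Γ^l_{ij}`. -/
def Christoffel {n : ℕ} (g : MetricField n) (l i j : Fin n) (x : Fin n → ℝ) : ℝ :=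
  ∑ k, (g x)⁻¹ l k * ChristoffelLow g i j k x

/-- Riemann curvature tensor `R^l_{ijk}` (type (1,3)). -/
def RiemannUp {n : ℕ} (g : MetricField n) (l i j k : Fin n) (x : Fin n → ℝ) : ℝ :=
  pd j (fun y => Christoffel g l k i y) x - pd k (fun y => Christoffel g l j i y) x
    + ∑ p, Christoffel g l j p x * Christoffel g p k i x
    - ∑ p, Christoffel g l k p x * Christoffel g p j i x

/-- Riemann curvature tensor `R_{ijkl}` (type (0,4)). -/
def RiemannLow {n : ℕ} (g : MetricField n) (i j k l : Fin n) (x : Fin n → ℝ) : ℝ :=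
  ∑ m, g x i m * RiemannUp g m j k l x

/-- Ricci tensor `R_{ij} = ∂_L Γ^L_{ij} - ∂_i Γ^L_{Lj} + Γ^P_{ij} Γ^L_{LP} - Γ^P_{Lj} Γ^L_{iP}`. -/
def RicciT {n : ℕ} (g : MetricField n) (i j : Fin n) (x : Fin n → ℝ) : ℝ :=
  (∑ l, pd l (fun y => Christoffel g l i j y) x)
    - (∑ l, pd i (fun y => Christoffel g l l j y) x)
    + (∑ p, ∑ l, Christoffel g p i j x * Christoffel g l l p x)
    - (∑ p, ∑ l, Christoffel g p l j x * Christoffel g l i p x)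

/-- Covariant Hessian `(∇²f)_{ij}` with respect to the metric `g`. -/
def HessT {n : ℕ} (g : MetricField n) (f : (Fin n → ℝ) → ℝ) (i j : Fin n) (x : Fin n → ℝ) : ℝ :=
  pd i (fun y => pd j f y) x - ∑ k, Christoffel g k i j x * pd k f x

/-- Laplacian `Δf = g^{ij}(∇²f)_{ij}`. -/
def LapT {n : ℕ} (g : MetricField n) (f : (Fin n → ℝ) → ℝ) (x : Fin n → ℝ) : ℝ :=
  ∑ i, ∑ j, (g x)⁻¹ i j * HessT g f i j x

/-- Squared gradient norm `|∇f|² = g^{ij} ∂_i f ∂_j f`. -/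
def GradSq {n : ℕ} (g : MetricField n) (f : (Fin n → ℝ) → ℝ) (x : Fin n → ℝ) : ℝ :=
  ∑ i, ∑ j, (g x)⁻¹ i j * pd i f x * pd j f x

/-- Scalar curvature `R = g^{ij} R_{ij}`. -/
def ScalarT {n : ℕ} (g : MetricField n) (x : Fin n → ℝ) : ℝ :=
  ∑ i, ∑ j, (g x)⁻¹ i j * RicciT g i j x

/-- Bakry–Émery Ricci tensor `Ric - (m/f) ∇²f`. -/
def BERic {n : ℕ} (g : MetricField n) (m : ℝ) (f : (Fin n → ℝ) → ℝ) (i j : Fin n)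
    (x : Fin n → ℝ) : ℝ :=
  RicciT g i j x - (m / f x) * HessT g f i j x

/-- The weighted quantity `F_φ^m = f Δf + (m-1)(|∇f|² - μ)`. -/
def Fphi {n : ℕ} (g : MetricField n) (m μ : ℝ) (f : (Fin n → ℝ) → ℝ) (x : Fin n → ℝ) : ℝ :=
  f x * LapT g f x + (m - 1) * (GradSq g f x - μ)

/-- The weighted scalar curvature `R_φ^m = R - (2m/f)Δf - (m(m-1)/f²)(|∇f|² - μ)`. -/
def Rphi {n : ℕ} (g : MetricField n) (m μ : ℝ) (f : (Fin n → ℝ) → ℝ) (x : Fin n → ℝ) : ℝ :=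
  ScalarT g x - (2 * m / f x) * LapT g f x
    - (m * (m - 1) / (f x) ^ 2) * (GradSq g f x - μ)

/-- Covariant derivative `∇_k P_{ij}` of a 2-tensor field `P` with respect to `g`. -/
def CovD2 {n : ℕ} (g P : MetricField n) (k i j : Fin n) (x : Fin n → ℝ) : ℝ :=
  pd k (fun y => P y i j) x - (∑ l, Christoffel g l k i x * P x l j)
    - (∑ l, Christoffel g l k j x * P x i l)

/-- Embedding of the `M`-indices into the ambient indices `{0} ∪ M ∪ {∞}`:
index `0` is the `t`-direction and `Fin.last (d+1)` is the `ρ`-direction. -/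
def emb {d : ℕ} (i : Fin d) : Fin (d + 2) := i.succ.castSucc

/-- The `M`-coordinates of an ambient point. -/
def mcoord {d : ℕ} (x : Fin (d + 2) → ℝ) : Fin d → ℝ := fun i => x (emb i)

/-- The straight and normal ambient metric `g̃ = 2ρ dt² + 2t dρ dt + t² g_ρ` built from a
one-parameter family `g_ρ` of metrics on `M`; coordinates `(t, x, ρ)` with `t` indexed by `0`
and `ρ` indexed by `Fin.last (d+1)`. -/
def ambMetric {d : ℕ} (gf : ℝ → (Fin d → ℝ) → Matrix (Fin d) (Fin d) ℝ) :
    MetricField (d + 2) := fun x =>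
  Matrix.of fun I J =>
    (if I = 0 ∧ J = 0 then 2 * x (Fin.last (d + 1)) else 0)
      + (if (I = 0 ∧ J = Fin.last (d + 1)) ∨ (I = Fin.last (d + 1) ∧ J = 0) then x 0 else 0)
      + (x 0) ^ 2 * ∑ i, ∑ j,
          (if I = emb i ∧ J = emb j then gf (x (Fin.last (d + 1))) (mcoord x) i j else 0)

/-- The ambient weighted function `f̃ = t f_ρ`. -/
def ambF {d : ℕ} (ff : ℝ → (Fin d → ℝ) → ℝ) (x : Fin (d + 2) → ℝ) : ℝ :=
  x 0 * ff (x (Fin.last (d + 1))) (mcoord x)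

/-- The cone metric `g̃ = -ds² + s² g₊` on `ℝ₊ × M` where `M` is `(d+1)`-dimensional;
the coordinate `s` is indexed by `0`. -/
def coneMetric {d : ℕ}
    (gp : (Fin (d + 1) → ℝ) → Matrix (Fin (d + 1)) (Fin (d + 1)) ℝ) :
    MetricField (d + 2) := fun x =>
  Matrix.of fun I J =>
    (if I = 0 ∧ J = 0 then -1 else 0)
      + (x 0) ^ 2 * ∑ i, ∑ j,
          (if I = Fin.succ i ∧ J = Fin.succ j then gp (x ∘ Fin.succ) i j else 0)

/-- The cone weighted function `f̃ = s f₊`. -/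
def coneF {d : ℕ} (fp : (Fin (d + 1) → ℝ) → ℝ) (x : Fin (d + 2) → ℝ) : ℝ :=
  x 0 * fp (x ∘ Fin.succ)

/-- The determinant of the coefficient matrix of `(g^{kl}ψ_{kl}, υ)` in the
order-`n` recursion for the weighted ambient metric equals, up to a nonzero factor,
`n² f (2n - d - m)(n - d - m)`; in particular it is nonzero iff `n ∉ {(d+m)/2, d+m}`. -/
theorem ambient_recursion_determinant (n d : ℕ) (m f : ℝ)
    (hd : 3 ≤ d) (hm : 0 ≤ m) (hf : 0 < f) (hn : 1 ≤ n) :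
    (∃ c : ℝ, c ≠ 0 ∧
      Matrix.det !![(2 * (n : ℝ) - 2 * d - m) / 2 * n, -(d : ℝ) * m * n / f;
                    (n : ℝ) * f ^ 2 / 2, (n : ℝ) * f * ((d : ℝ) + 2 * m - 2 * n)]
        = c * ((n : ℝ) ^ 2 * f * (2 * n - d - m) * ((n : ℝ) - d - m)))
    ∧ (Matrix.det !![(2 * (n : ℝ) - 2 * d - m) / 2 * n, -(d : ℝ) * m * n / f;
                    (n : ℝ) * f ^ 2 / 2, (n : ℝ) * f * ((d : ℝ) + 2 * m - 2 * n)] ≠ 0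
        ↔ ¬((n : ℝ) = ((d : ℝ) + m) / 2 ∨ (n : ℝ) = (d : ℝ) + m)) := by
  have hf' : f ≠ 0 := ne_of_gt hf
  have hn' : (0:ℝ) < n := by exact_mod_cast Nat.lt_of_lt_of_le Nat.zero_lt_one hn
  have hdet : Matrix.det !![(2 * (n : ℝ) - 2 * d - m) / 2 * n, -(d : ℝ) * m * n / f;
      (n : ℝ) * f ^ 2 / 2, (n : ℝ) * f * ((d : ℝ) + 2 * m - 2 * n)]
      = (-1) * ((n : ℝ) ^ 2 * f * (2 * n - d - m) * ((n : ℝ) - d - m)) := by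
    rw [Matrix.det_fin_two_of]
    field_simp
    ring
  constructor
  · exact ⟨-1, by norm_num, hdet⟩
  · rw [hdet]
    push_neg
    constructor
    · intro h
      constructor
      · intro he
        apply h
        rw [he]; ring_nf
      · intro he
        apply h
        rw [he]; ring_nf
    · rintro ⟨h1, h2⟩
      have e1 : (2 * (n:ℝ) - d - m) ≠ 0 := fun h => h1 (by linarith)
      have e2 : ((n:ℝ) - d - m) ≠ 0 := fun h => h2 (by linarith)
      positivity
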